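/- (Lemma 1) For any real vector u = (u_1,...,u_n), a weak order ρ on X = {X_1,...,X_n} maximizes ∑_i u_i·ρ(i) over all weak orders if and only if for all i, j, u_i > u_j implies X_i ≻_ρ X_j (i.e., ρ(i) > ρ(j)). -/
import Mathlib


/-- The Copeland index of alternative `i` in a binary relation `r` on `Fin n`. -/
noncomputable def copeland {n : ℕ} (r : Fin n → Fin n → Prop) (i : Fin n) : ℤ :=
  (({j | r i j} : Set (Fin n)).ncard : ℤ) - (({j | r j i} : Set (Fin n)).ncard : ℤ)

/-- A weak order: a complete and transitive binary relation. -/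
def IsWeakOrder {n : ℕ} (r : Fin n → Fin n → Prop) : Prop :=
  (∀ i j, r i j ∨ r j i) ∧ Transitive r

open Classical in
/-- Real-valued indicator of `s i j`. -/
noncomputable def myInd {n : ℕ} (s : Fin n → Fin n → Prop) (i j : Fin n) : ℝ :=
  if s i j then 1 else 0

lemma myInd_of_pos {n : ℕ} {s : Fin n → Fin n → Prop} {i j : Fin n} (h : s i j) :
    myInd s i j = 1 := by simp [myInd, h]

lemma myInd_of_neg {n : ℕ} {s : Fin n → Fin n → Prop} {i j : Fin n} (h : ¬ s i j) :
    myInd s i j = 0 := by simp [myInd, h]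

lemma myInd_abs_le {n : ℕ} (s : Fin n → Fin n → Prop) (i j : Fin n) :
    |myInd s i j - myInd s j i| ≤ 1 := by
  unfold myInd
  split <;> split <;> norm_num

lemma copeland_real {n : ℕ} (s : Fin n → Fin n → Prop) (i : Fin n) :
    (copeland s i : ℝ) = ∑ j, myInd s i j - ∑ j, myInd s j i := by
  classical
  have key : ∀ p : Fin n → Prop, (({j | p j} : Set (Fin n)).ncard : ℝ)
      = ∑ j, (if p j then (1:ℝ) else 0) := by
    intro p
    rw [Set.ncard_eq_toFinset_card', Set.toFinset_setOf, Finset.card_filter]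
    push_cast
    rfl
  unfold copeland
  push_cast
  rw [key, key]
  congr 1

lemma copeland_mono {n : ℕ} {r : Fin n → Fin n → Prop} (hr : IsWeakOrder r)
    {i j : Fin n} (hij : r i j) : copeland r j ≤ copeland r i := by
  obtain ⟨hc, ht⟩ := hr
  have h1 : ({k | r j k} : Set (Fin n)) ⊆ {k | r i k} := fun k hk => ht hij hk
  have h2 : ({k | r k i} : Set (Fin n)) ⊆ {k | r k j} := fun k hk => ht hk hij
  have c1 := Set.ncard_le_ncard h1 (Set.toFinite _)
  have c2 := Set.ncard_le_ncard h2 (Set.toFinite _)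
  unfold copeland; omega

lemma copeland_strict {n : ℕ} {r : Fin n → Fin n → Prop} (hr : IsWeakOrder r)
    {i j : Fin n} (hij : r i j) (hji : ¬ r j i) : copeland r j < copeland r i := by
  obtain ⟨hc, ht⟩ := hr
  have h1 : ({k | r j k} : Set (Fin n)) ⊂ {k | r i k} := by
    constructor
    · exact fun k hk => ht hij hk
    · intro hsub
      exact hji (hsub (show r i i from (hc i i).elim id id))
  have h2 : ({k | r k i} : Set (Fin n)) ⊆ {k | r k j} := fun k hk => ht hk hij
  have c1 := Set.ncard_lt_ncard h1 (Set.toFinite _)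
  have c2 := Set.ncard_le_ncard h2 (Set.toFinite _)
  unfold copeland; omega

lemma twice_value {n : ℕ} (u : Fin n → ℝ) (s : Fin n → Fin n → Prop) :
    2 * ∑ i, u i * (copeland s i : ℝ)
      = ∑ i, ∑ j, (u i - u j) * (myInd s i j - myInd s j i) := by
  have hA : ∑ i, ∑ j, u j * myInd s j i = ∑ i, ∑ j, u i * myInd s i j :=
    Finset.sum_comm
  have hB : ∑ i, ∑ j, u i * myInd s j i = ∑ i, ∑ j, u j * myInd s i j :=
    Finset.sum_comm
  have e1 : ∑ i, u i * (copeland s i : ℝ)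
      = (∑ i, ∑ j, u i * myInd s i j) - (∑ i, ∑ j, u i * myInd s j i) := by
    rw [← Finset.sum_sub_distrib]
    refine Finset.sum_congr rfl fun i _ => ?_
    rw [copeland_real, mul_sub, Finset.mul_sum, Finset.mul_sum]
  have e2 : ∑ i, ∑ j, (u i - u j) * (myInd s i j - myInd s j i)
      = ((∑ i, ∑ j, u i * myInd s i j) - (∑ i, ∑ j, u i * myInd s j i))
        - ((∑ i, ∑ j, u j * myInd s i j) - (∑ i, ∑ j, u j * myInd s j i)) := by
    simp_rw [sub_mul, mul_sub, Finset.sum_sub_distrib]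
  rw [e1, e2, hA, hB]; ring

/-- Lemma 1: a weak order maximizes `∑ i, u i * ρ(i)` over all weak orders
iff it preserves the strict order of the `u i`. -/
theorem stmt2 (n : ℕ) (u : Fin n → ℝ) (r : Fin n → Fin n → Prop) (hr : IsWeakOrder r) :
    (∀ s : Fin n → Fin n → Prop, IsWeakOrder s →
        ∑ i, u i * (copeland s i : ℝ) ≤ ∑ i, u i * (copeland r i : ℝ)) ↔
    (∀ i j, u i > u j → copeland r i > copeland r j) := by
  have bound : ∀ s : Fin n → Fin n → Prop, ∀ i j : Fin n,
      (u i - u j) * (myInd s i j - myInd s j i) ≤ |u i - u j| := by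
    intro s i j
    calc (u i - u j) * (myInd s i j - myInd s j i)
        ≤ |(u i - u j) * (myInd s i j - myInd s j i)| := le_abs_self _
      _ = |u i - u j| * |myInd s i j - myInd s j i| := abs_mul _ _
      _ ≤ |u i - u j| * 1 :=
          mul_le_mul_of_nonneg_left (myInd_abs_le s i j) (abs_nonneg _)
      _ = |u i - u j| := mul_one _
  have eqcase : ∀ s : Fin n → Fin n → Prop,
      (∀ i j, u i > u j → s i j ∧ ¬ s j i) →
      ∀ i j : Fin n, (u i - u j) * (myInd s i j - myInd s j i) = |u i - u j| := by
    intro s hs i j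
    rcases lt_trichotomy (u i) (u j) with h | h | h
    · obtain ⟨h1, h2⟩ := hs j i h
      rw [myInd_of_neg h2, myInd_of_pos h1, abs_of_neg (by linarith : u i - u j < 0)]
      ring
    · rw [h]; simp
    · obtain ⟨h1, h2⟩ := hs i j h
      rw [myInd_of_pos h1, myInd_of_neg h2, abs_of_pos (by linarith : (0:ℝ) < u i - u j)]
      ring
  constructor
  · intro hmax i j huij
    set s0 : Fin n → Fin n → Prop := fun a b => u b ≤ u a with hs0def
    have hs0 : IsWeakOrder s0 :=
      ⟨fun a b => le_total (u b) (u a), fun a b c hab hbc => le_trans hbc hab⟩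
    have hs0cond : ∀ a b, u a > u b → s0 a b ∧ ¬ s0 b a :=
      fun a b h => ⟨le_of_lt h, not_le.mpr h⟩
    have hv0 : 2 * ∑ i, u i * (copeland s0 i : ℝ) = ∑ i, ∑ j, |u i - u j| := by
      rw [twice_value]
      exact Finset.sum_congr rfl fun a _ =>
        Finset.sum_congr rfl fun b _ => eqcase s0 hs0cond a b
    have hge : 2 * ∑ i, u i * (copeland r i : ℝ) ≤ ∑ i, ∑ j, |u i - u j| := by
      rw [twice_value]
      exact Finset.sum_le_sum fun a _ => Finset.sum_le_sum fun b _ => bound r a b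
    have hle := hmax s0 hs0
    have heq : ∑ i, ∑ j, (u i - u j) * (myInd r i j - myInd r j i)
        = ∑ i, ∑ j, |u i - u j| := by
      rw [← twice_value]; linarith
    have houter := (Finset.sum_eq_sum_iff_of_le
      (fun a (_ : a ∈ Finset.univ) => Finset.sum_le_sum fun b _ => bound r a b)).mp heq
    have hterm := (Finset.sum_eq_sum_iff_of_le
      (fun b (_ : b ∈ Finset.univ) => bound r i b)).mp
      (houter i (Finset.mem_univ i)) j (Finset.mem_univ j)
    have h0 : (0:ℝ) < u i - u j := by linarith
    rw [abs_of_pos h0] at hterm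
    have hd : myInd r i j - myInd r j i = 1 := by
      have h' : (u i - u j) * (myInd r i j - myInd r j i) = (u i - u j) * 1 := by
        rw [mul_one]; exact hterm
      exact mul_left_cancel₀ (ne_of_gt h0) h'
    have hrij : r i j ∧ ¬ r j i := by
      by_cases h1 : r i j <;> by_cases h2 : r j i
      · rw [myInd_of_pos h1, myInd_of_pos h2] at hd; norm_num at hd
      · exact ⟨h1, h2⟩
      · rw [myInd_of_neg h1, myInd_of_pos h2] at hd; norm_num at hd
      · rw [myInd_of_neg h1, myInd_of_neg h2] at hd; norm_num at hd
    exact copeland_strict hr hrij.1 hrij.2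
  · intro hmono s hs
    have hrcond : ∀ a b, u a > u b → r a b ∧ ¬ r b a := by
      intro a b h
      have hcop := hmono a b h
      have hnba : ¬ r b a := fun hba =>
        absurd hcop (not_lt.mpr (copeland_mono hr hba))
      exact ⟨(hr.1 a b).resolve_right hnba, hnba⟩
    have h1 : 2 * ∑ i, u i * (copeland r i : ℝ) = ∑ i, ∑ j, |u i - u j| := by
      rw [twice_value]
      exact Finset.sum_congr rfl fun a _ =>
        Finset.sum_congr rfl fun b _ => eqcase r hrcond a b
    have h2 : 2 * ∑ i, u i * (copeland s i : ℝ) ≤ ∑ i, ∑ j, |u i - u j| := by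
      rw [twice_value]
      exact Finset.sum_le_sum fun a _ => Finset.sum_le_sum fun b _ => bound s a b
    linarith
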